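/- arXiv:2008.04475 — 2 statements merged into one kernel-verified Lean document; each statement's English description precedes it below -/
import Mathlib

section
/- Let (v_i)_{i≥1} be an exchangeable sequence of [0,1]-valued random variables with directing random measure ν (so conditionally on ν the v_i are i.i.d. from ν), and let w_j = v_j ∏_{i<j}(1-v_i). Then Σ_{j≥1} w_j = 1 almost surely if and only if ν({0}) < 1 almost surely. -/
open MeasureTheory Filter Finset
open scoped ENNReal



lemma stick_sum_eq_one {v : ℕ → ℝ} (h01 : ∀ i, v i ∈ Set.Icc (0:ℝ) 1) {ε : ℝ} (hε : 0 < ε)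
    (hinf : ∀ m, ∃ j, m ≤ j ∧ ε < v j) :
    (∑' j, v j * ∏ i ∈ Finset.range j, (1 - v i)) = 1 := by
  set p : ℕ → ℝ := fun n => ∏ i ∈ Finset.range n, (1 - v i) with hp
  have h0 : ∀ i, (0:ℝ) ≤ 1 - v i := fun i => by have := (h01 i).2; linarith
  have h1 : ∀ i, 1 - v i ≤ 1 := fun i => by have := (h01 i).1; linarith
  have hp0 : ∀ n, 0 ≤ p n := fun n => Finset.prod_nonneg fun i _ => h0 i
  have hpanti : Antitone p := by
    apply antitone_nat_of_succ_le
    intro n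
    have : p (n+1) = p n * (1 - v n) := Finset.prod_range_succ _ n
    rw [this]
    calc p n * (1 - v n) ≤ p n * 1 := by
          exact mul_le_mul_of_nonneg_left (h1 n) (hp0 n)
      _ = p n := mul_one _
  have hε1 : ε < 1 := by
    obtain ⟨j, -, hj⟩ := hinf 0
    exact lt_of_lt_of_le hj (h01 j).2
  have key : ∀ k, ∃ n, p n ≤ (1-ε)^k := by
    intro k
    induction k with
    | zero => exact ⟨0, by simp [hp]⟩
    | succ k ih =>
      obtain ⟨n, hn⟩ := ih
      obtain ⟨j, hnj, hj⟩ := hinf n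
      refine ⟨j+1, ?_⟩
      have hsplit : p (j+1) = p n * ∏ i ∈ Finset.Ico n (j+1), (1 - v i) := by
        rw [hp]
        exact (Finset.prod_range_mul_prod_Ico _ (Nat.le_succ_of_le hnj)).symm
      have htail : (∏ i ∈ Finset.Ico n (j+1), (1 - v i)) ≤ 1 - ε := by
        rw [Finset.prod_Ico_succ_top hnj]
        calc (∏ i ∈ Finset.Ico n j, (1 - v i)) * (1 - v j)
            ≤ 1 * (1 - v j) := by
              apply mul_le_mul_of_nonneg_right _ (h0 j)
              exact Finset.prod_le_one (fun i _ => h0 i) (fun i _ => h1 i)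
          _ = 1 - v j := one_mul _
          _ ≤ 1 - ε := by linarith
      rw [hsplit, pow_succ]
      exact mul_le_mul hn htail (Finset.prod_nonneg fun i _ => h0 i) (pow_nonneg (by linarith) k)
  have hplim : Tendsto p atTop (nhds 0) := by
    rw [Metric.tendsto_atTop]
    intro η hη
    have hpow : Tendsto (fun k => (1-ε)^k) atTop (nhds 0) :=
      tendsto_pow_atTop_nhds_zero_of_lt_one (by linarith) (by linarith)
    obtain ⟨k, hk⟩ := (Metric.tendsto_atTop.1 hpow η hη) |>.imp (fun k h => h k le_rfl)
    obtain ⟨n, hn⟩ := key k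
    refine ⟨n, fun n' hn' => ?_⟩
    have : dist ((1-ε)^k) 0 < η := hk
    rw [Real.dist_eq, sub_zero] at this ⊢
    rw [abs_of_nonneg (hp0 n')]
    rw [abs_of_nonneg (pow_nonneg (by linarith) k)] at this
    exact lt_of_le_of_lt (le_trans (hpanti hn') hn) this
  have hS : ∀ n, ∑ j ∈ Finset.range n, v j * p j = 1 - p n := by
    intro n
    induction n with
    | zero => simp [hp]
    | succ n ih =>
      rw [Finset.sum_range_succ, ih]
      have : p (n+1) = p n * (1 - v n) := Finset.prod_range_succ _ n
      rw [this]; ring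
  have hnn : ∀ j, 0 ≤ v j * p j := fun j => mul_nonneg (h01 j).1 (hp0 j)
  have htend : Tendsto (fun n => ∑ j ∈ Finset.range n, v j * p j) atTop (nhds 1) := by
    simp only [hS]
    have := (tendsto_const_nhds (x := (1:ℝ)) (f := atTop)).sub hplim
    simpa using this
  exact ((hasSum_iff_tendsto_nat_of_nonneg hnn 1).2 htend).tsum_eq

def CondIID {Ω : Type*} [MeasurableSpace Ω] (P : Measure Ω)
    (ν : Ω → Measure ℝ) (v : ℕ → Ω → ℝ) : Prop :=
  ∀ (n : ℕ) (B : Fin n → Set ℝ), (∀ i, MeasurableSet (B i)) →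
    ∀ C : Set (Measure ℝ), MeasurableSet C →
      P ((ν ⁻¹' C) ∩ ⋂ i, {ω | v (i : ℕ) ω ∈ B i}) =
        ∫⁻ ω in ν ⁻¹' C, ∏ i, ν ω (B i) ∂P

/-- the stick-breaking weights built from exchangeable `[0,1]`-valued
length variables directed by `ν` sum to one a.s. iff `ν({0}) < 1` a.s. -/
theorem stmt_2 {Ω : Type*} [MeasurableSpace Ω] (P : Measure Ω) [IsProbabilityMeasure P]
    (ν : Ω → Measure ℝ) (hν_meas : Measurable ν)
    (hν_prob : ∀ ω, IsProbabilityMeasure (ν ω))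
    (hν_supp : ∀ ω, ν ω (Set.Icc (0 : ℝ) 1)ᶜ = 0)
    (v : ℕ → Ω → ℝ) (hv_meas : ∀ i, Measurable (v i))
    (hv01 : ∀ i ω, v i ω ∈ Set.Icc (0 : ℝ) 1)
    (hcond : CondIID P ν v) :
    (∀ᵐ ω ∂P, (∑' j, v j ω * ∏ i ∈ Finset.range j, (1 - v i ω)) = 1) ↔
      (∀ᵐ ω ∂P, ν ω {0} < 1) := by
  constructor
  · -- sum = 1 a.s. → ν{0} < 1 a.s.
    intro hsum
    set C : Set (Measure ℝ) := (fun μ : Measure ℝ => μ {0}) ⁻¹' {1} with hCdef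
    have hC : MeasurableSet C :=
      (Measure.measurable_coe (measurableSet_singleton (0:ℝ))) (measurableSet_singleton 1)
    have hnull : ∀ i, P ((ν ⁻¹' C) ∩ {ω | v i ω ≠ 0}) = 0 := by
      intro i
      set B : Fin (i+1) → Set ℝ := fun j => if (j:ℕ) = i then ({0}ᶜ : Set ℝ) else Set.univ
        with hBdef
      have hBmeas : ∀ j, MeasurableSet (B j) := by
        intro j
        by_cases hj : (j:ℕ) = i <;>
          simp [hBdef, hj, (measurableSet_singleton (0:ℝ)).compl]
      have h := hcond (i+1) B hBmeas C hC
      have hset : (⋂ j : Fin (i+1), {ω | v (j:ℕ) ω ∈ B j}) = {ω | v i ω ≠ 0} := by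
        ext ω
        simp only [Set.mem_iInter, Set.mem_setOf_eq, hBdef]
        constructor
        · intro hall
          have := hall ⟨i, Nat.lt_succ_self i⟩
          simpa using this
        · intro hne j
          by_cases hj : (j:ℕ) = i
          · simp [hj, hne]
          · simp [hj]
      rw [hset] at h
      rw [h]
      have hle : ∫⁻ ω in ν ⁻¹' C, ∏ j, ν ω (B j) ∂P ≤ ∫⁻ _ in ν ⁻¹' C, 0 ∂P := by
        apply setLIntegral_mono' (hν_meas hC)
        intro ω hω
        haveI := hν_prob ω
        have hω1 : ν ω {0} = 1 := hω
        have hcompl : ν ω ({0}ᶜ : Set ℝ) = 0 := by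
          have hc := measure_compl (measurableSet_singleton (0:ℝ)) (measure_ne_top (ν ω) _)
          rw [measure_univ, hω1] at hc
          simpa using hc
        have : (∏ j, ν ω (B j)) = 0 := by
          apply Finset.prod_eq_zero (Finset.mem_univ (⟨i, Nat.lt_succ_self i⟩ : Fin (i+1)))
          simp [hBdef, hcompl]
        exact le_of_eq this
      simpa using le_antisymm (by simpa using hle) zero_le'
    have hNnull : P ((ν ⁻¹' C) ∩ ⋃ i, {ω | v i ω ≠ 0}) = 0 := by
      rw [Set.inter_iUnion]
      exact measure_iUnion_null hnull
    have hae := measure_eq_zero_iff_ae_notMem.1 hNnull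
    filter_upwards [hsum, hae] with ω hsω hNω
    haveI := hν_prob ω
    have hne : ν ω {0} ≠ 1 := by
      intro h1
      have hvz : ∀ i, v i ω = 0 := by
        intro i
        by_contra hvi
        exact hNω ⟨h1, Set.mem_iUnion.2 ⟨i, hvi⟩⟩
      rw [show (∑' j, v j ω * ∏ i ∈ Finset.range j, (1 - v i ω)) = 0 by
        simp [hvz]] at hsω
      exact one_ne_zero hsω.symm
    exact lt_of_le_of_ne prob_le_one hne
  · -- ν{0} < 1 a.s. → sum = 1 a.s.
    intro hν0
    set ε : ℕ → ℝ := fun k => 1 / (k + 1) with hεdef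
    have hεpos : ∀ k, 0 < ε k := fun k => by positivity
    set δ : ℕ → ℝ≥0∞ := fun l => ((l : ℝ≥0∞) + 1)⁻¹ with hδdef
    set Cs : ℕ → ℕ → Set (Measure ℝ) :=
      fun k l => (fun μ : Measure ℝ => μ (Set.Ioi (ε k))) ⁻¹' Set.Ici (δ l) with hCsdef
    have hCs : ∀ k l, MeasurableSet (Cs k l) := fun k l =>
      (Measure.measurable_coe measurableSet_Ioi) measurableSet_Ici
    have key : ∀ k l m,
        P ((ν ⁻¹' Cs k l) ∩ {ω | ∀ j, m ≤ j → v j ω ≤ ε k}) = 0 := by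
      intro k l m
      have hδ0 : δ l ≠ 0 := by
        simp [hδdef]
      have hlt1 : (1 : ℝ≥0∞) - δ l < 1 :=
        ENNReal.sub_lt_self ENNReal.one_ne_top one_ne_zero hδ0
      have hbound : ∀ n : ℕ,
          P ((ν ⁻¹' Cs k l) ∩ {ω | ∀ j, m ≤ j → v j ω ≤ ε k}) ≤ (1 - δ l) ^ n := by
        intro n
        set B : Fin (m+n) → Set ℝ :=
          fun j => if (j:ℕ) < m then Set.univ else Set.Iic (ε k) with hBdef
        have hBmeas : ∀ j, MeasurableSet (B j) := by
          intro j
          by_cases hj : (j:ℕ) < m <;> simp [hBdef, hj, measurableSet_Iic]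
        have h := hcond (m+n) B hBmeas (Cs k l) (hCs k l)
        have hsub : (ν ⁻¹' Cs k l) ∩ {ω | ∀ j, m ≤ j → v j ω ≤ ε k} ⊆
            (ν ⁻¹' Cs k l) ∩ ⋂ j : Fin (m+n), {ω | v (j:ℕ) ω ∈ B j} := by
          apply Set.inter_subset_inter_right
          intro ω hω
          simp only [Set.mem_iInter, Set.mem_setOf_eq, hBdef]
          intro j
          by_cases hj : (j:ℕ) < m
          · simp [hj]
          · simp only [hj, if_false, Set.mem_Iic]
            exact hω _ (le_of_not_gt hj)
        calc P ((ν ⁻¹' Cs k l) ∩ {ω | ∀ j, m ≤ j → v j ω ≤ ε k})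
            ≤ P ((ν ⁻¹' Cs k l) ∩ ⋂ j : Fin (m+n), {ω | v (j:ℕ) ω ∈ B j}) :=
              measure_mono hsub
          _ = ∫⁻ ω in ν ⁻¹' Cs k l, ∏ j, ν ω (B j) ∂P := h
          _ ≤ ∫⁻ _ in ν ⁻¹' Cs k l, (1 - δ l) ^ n ∂P := by
              apply setLIntegral_mono' (hν_meas (hCs k l))
              intro ω hω
              haveI := hν_prob ω
              have hωC : δ l ≤ ν ω (Set.Ioi (ε k)) := hω
              have hIic : ν ω (Set.Iic (ε k)) ≤ 1 - δ l := by
                have hadd : ν ω (Set.Iic (ε k)) + ν ω (Set.Ioi (ε k)) = 1 := by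
                  have := measure_add_measure_compl (μ := ν ω) (measurableSet_Iic (a := ε k))
                  rwa [Set.compl_Iic, measure_univ] at this
                have heq : ν ω (Set.Iic (ε k)) = 1 - ν ω (Set.Ioi (ε k)) :=
                  ENNReal.eq_sub_of_add_eq (measure_ne_top _ _) hadd
                rw [heq]
                exact tsub_le_tsub_left hωC 1
              calc (∏ j, ν ω (B j))
                  ≤ ∏ j : Fin (m+n), (if (j:ℕ) < m then 1 else (1 - δ l)) := by
                    apply Finset.prod_le_prod'
                    intro j _
                    by_cases hj : (j:ℕ) < m
                    · simp only [hBdef, hj, if_true]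
                      exact prob_le_one
                    · simp only [hBdef, hj, if_false]
                      exact hIic
                _ = (1 - δ l) ^ n := by
                    rw [Fin.prod_univ_eq_prod_range (fun j => if j < m then 1 else (1 - δ l))]
                    rw [← Finset.prod_range_mul_prod_Ico _ (Nat.le_add_right m n)]
                    rw [Finset.prod_eq_one (fun j hj => by
                      simp [Finset.mem_range.1 hj])]
                    rw [one_mul]
                    rw [Finset.prod_congr rfl (fun j hj =>
                      if_neg (Nat.not_lt.2 (Finset.mem_Ico.1 hj).1))]
                    rw [Finset.prod_const, Nat.card_Ico, Nat.add_sub_cancel_left]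
          _ = (1 - δ l) ^ n * P (ν ⁻¹' Cs k l) := setLIntegral_const _ _
          _ ≤ (1 - δ l) ^ n * 1 := mul_le_mul_right prob_le_one _
          _ = (1 - δ l) ^ n := mul_one _
      have htend : Tendsto (fun n => ((1:ℝ≥0∞) - δ l) ^ n) atTop (nhds 0) :=
        ENNReal.tendsto_pow_atTop_nhds_zero_of_lt_one hlt1
      have := ge_of_tendsto' htend hbound
      exact le_antisymm this zero_le'
    have hNnull : P (⋃ k, ⋃ l, ⋃ m,
        (ν ⁻¹' Cs k l) ∩ {ω | ∀ j, m ≤ j → v j ω ≤ ε k}) = 0 :=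
      measure_iUnion_null fun k => measure_iUnion_null fun l =>
        measure_iUnion_null (key k l)
    have hae := measure_eq_zero_iff_ae_notMem.1 hNnull
    filter_upwards [hν0, hae] with ω hω0 hNω
    haveI := hν_prob ω
    -- Step 1 : some Ioi (ε k) has positive measure
    have hIoi : ∃ k, ν ω (Set.Ioi (ε k)) ≠ 0 := by
      by_contra hall
      push_neg at hall
      have hIoi0 : ν ω (Set.Ioi (0:ℝ)) = 0 := by
        have hcover : Set.Ioi (0:ℝ) ⊆ ⋃ k, Set.Ioi (ε k) := by
          intro x hx
          obtain ⟨k, hk⟩ := exists_nat_one_div_lt (Set.mem_Ioi.1 hx)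
          exact Set.mem_iUnion.2 ⟨k, hk⟩
        exact measure_mono_null hcover (measure_iUnion_null hall)
      have hIio0 : ν ω (Set.Iio (0:ℝ)) = 0 := by
        apply measure_mono_null _ (hν_supp ω)
        intro x hx
        simp only [Set.mem_compl_iff, Set.mem_Icc, not_and_or, not_le]
        exact Or.inl hx
      have hcompl0 : ν ω ({0}ᶜ : Set ℝ) = 0 := by
        rw [← Set.Iio_union_Ioi]
        exact measure_union_null hIio0 hIoi0
      have hc := measure_compl (measurableSet_singleton (0:ℝ)) (measure_ne_top (ν ω) _)
      rw [hcompl0, measure_univ] at hc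
      have : (1:ℝ≥0∞) ≤ ν ω {0} := by
        rwa [eq_comm, tsub_eq_zero_iff_le] at hc
      exact absurd hω0 (not_lt.2 this)
    obtain ⟨k, hk⟩ := hIoi
    -- Step 2 : find l with δ l ≤ ν ω (Ioi (ε k))
    obtain ⟨n0, hn0⟩ := ENNReal.exists_inv_nat_lt hk
    have hl : δ n0 ≤ ν ω (Set.Ioi (ε k)) := by
      refine le_trans ?_ hn0.le
      simp only [hδdef]
      exact ENNReal.inv_le_inv.2 (le_add_of_nonneg_right zero_le_one) |>.trans le_rfl
    -- Step 3 : infinitely many large v's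
    have hinf : ∀ m, ∃ j, m ≤ j ∧ ε k < v j ω := by
      intro m
      by_contra hno
      push_neg at hno
      apply hNω
      refine Set.mem_iUnion.2 ⟨k, Set.mem_iUnion.2 ⟨n0, Set.mem_iUnion.2 ⟨m, ⟨hl, ?_⟩⟩⟩⟩
      exact fun j hj => hno j hj
    exact stick_sum_eq_one (fun i => hv01 i ω) (hεpos k) hinf
end

section
/- For the exponential integral E₁(β) = ∫_β^∞ x⁻¹ e^{-x} dx and ρ(β) = (1 + β² e^β E₁(β) - β)/2, using the bounds (e^{-β}/2) log(1 + 2/β) < E₁(β) < e^{-β} log(1 + 1/β) for β > 0, it holds that ρ(β) → 0 as β → ∞ and limsup_{β→0} ρ(β) ≤ 1/2. -/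
set_option maxHeartbeats 1000000


open Filter

/-- The exponential integral `E₁(β) = ∫_β^∞ x⁻¹ e^{-x} dx`. -/
noncomputable def expInt (β : ℝ) : ℝ := ∫ x in Set.Ioi β, Real.exp (-x) / x

/-- The tie probability of a normalized inverse-Gaussian random measure with total mass
parameter `β`: `ρ(β) = (1 + β² e^β E₁(β) - β)/2`. -/
noncomputable def ρNIG (β : ℝ) : ℝ := (1 + β ^ 2 * Real.exp β * expInt β - β) / 2

section Helpers
open Filter MeasureTheory Set

lemma integrableOn_aux {β : ℝ} (hβ : 0 < β) (n : ℕ) :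
    IntegrableOn (fun x => Real.exp (-x) / x ^ n) (Set.Ioi β) := by
  have hmaj : IntegrableOn (fun x => (β ^ n)⁻¹ * Real.exp (-1 * x)) (Set.Ioi β) :=
    (exp_neg_integrableOn_Ioi β one_pos).const_mul _
  refine hmaj.mono' ?_ ?_
  · refine (ContinuousOn.div ?_ (continuous_pow n).continuousOn
      (fun x hx => pow_ne_zero n (ne_of_gt (hβ.trans hx)))).aestronglyMeasurable measurableSet_Ioi
    exact (Real.continuous_exp.comp continuous_neg).continuousOn
  · filter_upwards [ae_restrict_mem measurableSet_Ioi] with x hx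
    have hx' : β < x := hx
    have h0 : (0:ℝ) < x := hβ.trans hx'
    rw [Real.norm_eq_abs, abs_of_nonneg (div_nonneg (Real.exp_nonneg _) (pow_nonneg h0.le n)),
      inv_mul_eq_div]
    rw [show -1 * x = -x by ring]
    exact div_le_div_of_nonneg_left (Real.exp_nonneg _) (pow_pos hβ n)
      (pow_le_pow_left₀ hβ.le hx'.le n)

lemma key {β : ℝ} (hβ : 0 < β) :
    expInt β = Real.exp (-β) * (β⁻¹ - (β ^ 2)⁻¹)
      + ∫ x in Set.Ioi β, 2 * (Real.exp (-x) / x ^ 3) := by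
  have hderiv : ∀ x ∈ Set.Ici β,
      HasDerivAt (fun x : ℝ => -(Real.exp (-x) * (x⁻¹ - (x ^ 2)⁻¹)))
        (Real.exp (-x) * x⁻¹ - 2 * (Real.exp (-x) * (x ^ 3)⁻¹)) x := by
    intro x hx
    have hx0 : (0:ℝ) < x := lt_of_lt_of_le hβ hx
    have h1 : HasDerivAt (fun x : ℝ => Real.exp (-x)) (-Real.exp (-x)) x := by
      simpa [Function.comp_def] using (Real.hasDerivAt_exp (-x)).comp x (hasDerivAt_neg x)
    have h2 : HasDerivAt (fun x : ℝ => x⁻¹) (-(x ^ 2)⁻¹) x := hasDerivAt_inv hx0.ne'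
    have h3 : HasDerivAt (fun x : ℝ => (x ^ 2)⁻¹)
        (-(2 * x ^ 1) / (x ^ 2) ^ 2) x :=
      (hasDerivAt_pow 2 x).inv (pow_ne_zero 2 hx0.ne')
    have := ((h1.mul (h2.sub h3)).neg)
    refine this.congr_deriv ?_
    simp only [Pi.sub_apply]
    field_simp
    ring
  have htend : Tendsto (fun x : ℝ => -(Real.exp (-x) * (x⁻¹ - (x ^ 2)⁻¹))) atTop (nhds 0) := by
    have h1 : Tendsto (fun x : ℝ => Real.exp (-x)) atTop (nhds 0) :=
      Real.tendsto_exp_neg_atTop_nhds_zero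
    have h2 : Tendsto (fun x : ℝ => x⁻¹ - (x ^ 2)⁻¹) atTop (nhds 0) := by
      have hp : Tendsto (fun x : ℝ => x ^ 2) atTop atTop := tendsto_pow_atTop (by norm_num)
      simpa using tendsto_inv_atTop_zero.sub (tendsto_inv_atTop_zero.comp hp)
    simpa using (h1.mul h2).neg
  have hint : IntegrableOn
      (fun x => Real.exp (-x) * x⁻¹ - 2 * (Real.exp (-x) * (x ^ 3)⁻¹)) (Set.Ioi β) := by
    have h0 : IntegrableOn (fun x => Real.exp (-x) / x ^ 1 - 2 * (Real.exp (-x) / x ^ 3))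
        (Set.Ioi β) := (integrableOn_aux hβ 1).sub ((integrableOn_aux hβ 3).const_mul 2)
    refine h0.congr_fun (fun x hx => ?_) measurableSet_Ioi
    simp [div_eq_mul_inv]
  have hFTC := integral_Ioi_of_hasDerivAt_of_tendsto' hderiv hint htend
  have hsplit : ∀ x ∈ Set.Ioi β, Real.exp (-x) / x =
      (Real.exp (-x) * x⁻¹ - 2 * (Real.exp (-x) * (x ^ 3)⁻¹)) + 2 * (Real.exp (-x) / x ^ 3) := by
    intro x hx
    simp [div_eq_mul_inv]
  have h3int : IntegrableOn (fun x => 2 * (Real.exp (-x) / x ^ 3)) (Set.Ioi β) :=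
    (integrableOn_aux hβ 3).const_mul 2
  calc expInt β = ∫ x in Set.Ioi β,
        ((Real.exp (-x) * x⁻¹ - 2 * (Real.exp (-x) * (x ^ 3)⁻¹)) + 2 * (Real.exp (-x) / x ^ 3)) :=
        setIntegral_congr_fun measurableSet_Ioi hsplit
    _ = (∫ x in Set.Ioi β, (Real.exp (-x) * x⁻¹ - 2 * (Real.exp (-x) * (x ^ 3)⁻¹)))
        + ∫ x in Set.Ioi β, 2 * (Real.exp (-x) / x ^ 3) := integral_add hint h3int
    _ = Real.exp (-β) * (β⁻¹ - (β ^ 2)⁻¹) + ∫ x in Set.Ioi β, 2 * (Real.exp (-x) / x ^ 3) := by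
        rw [hFTC]; ring

lemma R_nonneg {β : ℝ} (hβ : 0 < β) : 0 ≤ ∫ x in Set.Ioi β, 2 * (Real.exp (-x) / x ^ 3) := by
  refine setIntegral_nonneg measurableSet_Ioi fun x hx => ?_
  have hx0 : (0 : ℝ) < x := hβ.trans hx
  positivity

lemma rho_eq {β : ℝ} (hβ : 0 < β) :
    ρNIG β = β ^ 2 * Real.exp β * (∫ x in Set.Ioi β, 2 * (Real.exp (-x) / x ^ 3)) / 2 := by
  rw [ρNIG, key hβ, Real.exp_neg]
  have h1 : Real.exp β ≠ 0 := (Real.exp_pos β).ne'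
  field_simp
  ring

lemma R_le {β : ℝ} (hβ : 0 < β) :
    (∫ x in Set.Ioi β, 2 * (Real.exp (-x) / x ^ 3)) ≤ 2 / β ^ 3 * Real.exp (-β) := by
  have hexp : IntegrableOn (fun x : ℝ => Real.exp (-x)) (Set.Ioi β) := by
    have := exp_neg_integrableOn_Ioi β one_pos
    simpa using this
  have hmono := setIntegral_mono_on ((integrableOn_aux hβ 3).const_mul 2)
    (hexp.const_mul (2 / β ^ 3)) measurableSet_Ioi (fun x hx => ?_)
  · calc (∫ x in Set.Ioi β, 2 * (Real.exp (-x) / x ^ 3))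
        ≤ ∫ x in Set.Ioi β, 2 / β ^ 3 * Real.exp (-x) := hmono
      _ = 2 / β ^ 3 * Real.exp (-β) := by rw [MeasureTheory.integral_const_mul, integral_exp_neg_Ioi]
  · have hx' : β < x := hx
    have hx0 : (0 : ℝ) < x := hβ.trans hx'
    have h2 : 2 / x ^ 3 ≤ 2 / β ^ 3 := by
      gcongr
    calc 2 * (Real.exp (-x) / x ^ 3) = Real.exp (-x) * (2 / x ^ 3) := by ring
      _ ≤ Real.exp (-x) * (2 / β ^ 3) := mul_le_mul_of_nonneg_left h2 (Real.exp_nonneg _)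
      _ = 2 / β ^ 3 * Real.exp (-x) := by ring

end Helpers

/-- using the bounds
`(e^{-β}/2) log(1 + 2/β) < E₁(β) < e^{-β} log(1 + 1/β)` for `β > 0`, the tie probability
satisfies `ρ(β) → 0` as `β → ∞`, and `limsup_{β→0⁺} ρ(β) ≤ 1/2`. -/
theorem stmt_19
    (hlow : ∀ β : ℝ, 0 < β → Real.exp (-β) / 2 * Real.log (1 + 2 / β) < expInt β)
    (hupp : ∀ β : ℝ, 0 < β → expInt β < Real.exp (-β) * Real.log (1 + 1 / β)) :
    Tendsto ρNIG atTop (nhds 0) ∧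
      limsup ρNIG (nhdsWithin 0 (Set.Ioi 0)) ≤ 1 / 2 := by
  constructor
  · refine tendsto_of_tendsto_of_tendsto_of_le_of_le' tendsto_const_nhds
      tendsto_inv_atTop_zero ?_ ?_
    · filter_upwards [eventually_gt_atTop (0:ℝ)] with β hβ
      rw [rho_eq hβ]
      have := R_nonneg hβ
      positivity
    · filter_upwards [eventually_gt_atTop (0:ℝ)] with β hβ
      rw [rho_eq hβ]
      have hR := R_le hβ
      have h1 : β ^ 2 * Real.exp β * (∫ x in Set.Ioi β, 2 * (Real.exp (-x) / x ^ 3))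
          ≤ β ^ 2 * Real.exp β * (2 / β ^ 3 * Real.exp (-β)) :=
        mul_le_mul_of_nonneg_left hR (by positivity)
      have h2 : β ^ 2 * Real.exp β * (2 / β ^ 3 * Real.exp (-β)) = 2 / β := by
        rw [Real.exp_neg]
        have h1 : Real.exp β ≠ 0 := (Real.exp_pos β).ne'
        field_simp
      have h3 : β ^ 2 * Real.exp β * (∫ x in Set.Ioi β, 2 * (Real.exp (-x) / x ^ 3)) / 2
          ≤ (2 / β) / 2 := by linarith
      calc β ^ 2 * Real.exp β * (∫ x in Set.Ioi β, 2 * (Real.exp (-x) / x ^ 3)) / 2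
          ≤ (2 / β) / 2 := h3
        _ = β⁻¹ := by ring
  · have hbound : ∀ᶠ β in nhdsWithin (0:ℝ) (Set.Ioi 0), ρNIG β ≤ 1/2 := by
      filter_upwards [self_mem_nhdsWithin] with β hβ
      have hβ : (0:ℝ) < β := hβ
      have hlog : Real.log (1 + 1/β) ≤ 1/β := by
        have h := Real.log_le_sub_one_of_pos (show (0:ℝ) < 1 + 1/β by positivity)
        linarith
      have hE : β ^ 2 * Real.exp β * expInt β
          ≤ β ^ 2 * Real.exp β * (Real.exp (-β) * Real.log (1 + 1/β)) :=
        mul_le_mul_of_nonneg_left (hupp β hβ).le (by positivity)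
      have heq : β ^ 2 * Real.exp β * (Real.exp (-β) * Real.log (1 + 1/β))
          = β ^ 2 * Real.log (1 + 1/β) := by
        rw [Real.exp_neg]
        have h1 : Real.exp β ≠ 0 := (Real.exp_pos β).ne'
        field_simp
      have h3 : β ^ 2 * Real.log (1 + 1/β) ≤ β := by
        calc β ^ 2 * Real.log (1 + 1/β) ≤ β ^ 2 * (1/β) :=
              mul_le_mul_of_nonneg_left hlog (sq_nonneg β)
          _ = β := by field_simp [hβ.ne']
      rw [ρNIG]
      linarith
    have hcb : IsCoboundedUnder (· ≤ ·) (nhdsWithin (0:ℝ) (Set.Ioi 0)) ρNIG := by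
      refine isCoboundedUnder_le_of_eventually_le _ (x := 0) ?_
      filter_upwards [self_mem_nhdsWithin] with β hβ
      have hβ' : (0:ℝ) < β := hβ
      rw [rho_eq hβ']
      have := R_nonneg hβ'
      positivity
    exact limsup_le_of_le hcb hbound
end
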